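/- Let G = (V,E,w) be a weighted graph with adjacency matrix A (A_{kj} = w(k,j) if {k,j} ∈ E, A_{jj}=0, and ∞ otherwise), and let S ⊆ V with |S| = s. Suppose B is an s×n matrix such that for every i ∈ S and j ∈ V, B_{ij} is a c-approximation of d_G^{(t)}(i,j), the length of the shortest path from i to j using at most t edges. Let C = B ⋆ A be the distance product, and let C' be a c'-approximation of C. Then for all i ∈ S and j ∈ V, C'_{ij} is a (c·c')-approximation of d_G^{(t+1)}(i,j). -/

import Mathlib

open scoped ENNReal

/-- `hopDist w t u v` is the minimum weight of a `u`–`v` walk with at most `t`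
edges, where `w` is the (extended-real-valued) adjacency matrix. -/
noncomputable def hopDist {V : Type*} [Fintype V] [DecidableEq V]
    (w : V → V → ℝ≥0∞) : ℕ → V → V → ℝ≥0∞
  | 0 => fun u v => if u = v then 0 else ⊤
  | t + 1 => fun u v => min (hopDist w t u v) (⨅ k, hopDist w t u k + w k v)

lemma hopDist_succ_eq {V : Type*} [Fintype V] [DecidableEq V]
    (A : V → V → ℝ≥0∞) (hdiag : ∀ v, A v v = 0) (t : ℕ) (u v : V) :
    hopDist A (t + 1) u v = ⨅ k, hopDist A t u k + A k v := by
  refine le_antisymm (min_le_right _ _) (le_min ?_ le_rfl)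
  calc (⨅ k, hopDist A t u k + A k v) ≤ hopDist A t u v + A v v := iInf_le _ v
    _ = hopDist A t u v := by rw [hdiag, add_zero]

/-- one approximate min-plus product with the adjacency matrix
turns `c`-approximate `t`-bounded distances into `c·c'`-approximate
`(t+1)`-bounded distances. -/
theorem stmt_1 {V S : Type*} [Fintype V] [DecidableEq V] [Nonempty V]
    (A : V → V → ℝ≥0∞) (hdiag : ∀ v, A v v = 0) (f : S → V) (t : ℕ)
    (c c' : ℝ≥0∞) (hc : 1 ≤ c) (hc' : 1 ≤ c')
    (B : S → V → ℝ≥0∞)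
    (hB : ∀ i j, hopDist A t (f i) j ≤ B i j ∧ B i j ≤ c * hopDist A t (f i) j)
    (C' : S → V → ℝ≥0∞)
    (hC' : ∀ i j, (⨅ k, B i k + A k j) ≤ C' i j ∧
        C' i j ≤ c' * ⨅ k, B i k + A k j) :
    ∀ i j, hopDist A (t + 1) (f i) j ≤ C' i j ∧
      C' i j ≤ c * c' * hopDist A (t + 1) (f i) j := by
  intro i j
  rw [hopDist_succ_eq A hdiag]
  constructor
  · refine le_trans ?_ (hC' i j).1
    exact iInf_mono fun k => add_le_add (hB i k).1 le_rfl
  · refine le_trans (hC' i j).2 ?_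
    rw [mul_assoc, mul_left_comm]
    refine mul_le_mul' le_rfl ?_
    -- need : (⨅ k, B i k + A k j) ≤ c * ⨅ k, hopDist A t (f i) k + A k j
    obtain ⟨k0, hk0⟩ := Finite.exists_min (fun k => hopDist A t (f i) k + A k j)
    have hinf : (⨅ k, hopDist A t (f i) k + A k j)
        = hopDist A t (f i) k0 + A k0 j :=
      le_antisymm (iInf_le _ k0) (le_iInf hk0)
    rw [hinf, mul_add]
    calc (⨅ k, B i k + A k j) ≤ B i k0 + A k0 j := iInf_le _ k0
      _ ≤ c * hopDist A t (f i) k0 + c * A k0 j := by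
          refine add_le_add (hB i k0).2 ?_
          calc A k0 j = 1 * A k0 j := (one_mul _).symm
            _ ≤ c * A k0 j := mul_le_mul' hc le_rfl
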